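/- If n, d are natural numbers with r a nonnegative real, and L_n(r) := {x ∈ ℝⁿ⁺¹ : √(x1² + ⋯ + xn²) ≤ r·x_{n+1}}, then the inclusion L_n(1) ⊛ L_n(1) ⊆ L_n(1) ⊙ L_n(r) implies r ≥ n. -/

import Mathlib

open scoped TensorProduct
open TensorProduct

section Defs

variable {V V' V1 V2 : Type*}
  [AddCommGroup V] [Module ℝ V] [AddCommGroup V'] [Module ℝ V']
  [AddCommGroup V1] [Module ℝ V1] [AddCommGroup V2] [Module ℝ V2]

/-- The dual cone of a set `C`: linear functionals nonnegative on `C`. -/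
def dualCone (C : Set V) : Set (Module.Dual ℝ V) := {f | ∀ x ∈ C, 0 ≤ f x}

/-- The functional `f ⊗ g` on `V1 ⊗ V2`. -/
noncomputable def pairTensor (f : Module.Dual ℝ V1) (g : Module.Dual ℝ V2) :
    Module.Dual ℝ (V1 ⊗[ℝ] V2) :=
  (TensorProduct.lid ℝ ℝ).toLinearMap ∘ₗ TensorProduct.map f g

/-- The minimal tensor product of two cones: the convex hull of the product tensors. -/
def minTensor (C1 : Set V1) (C2 : Set V2) : Set (V1 ⊗[ℝ] V2) :=
  convexHull ℝ {z | ∃ x ∈ C1, ∃ y ∈ C2, z = x ⊗ₜ[ℝ] y}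

/-- The maximal tensor product of two cones: tensors nonnegative on product functionals. -/
def maxTensor (C1 : Set V1) (C2 : Set V2) : Set (V1 ⊗[ℝ] V2) :=
  {z | ∀ f ∈ dualCone C1, ∀ g ∈ dualCone C2, 0 ≤ pairTensor f g z}

/-- A cone: a set closed under multiplication by nonnegative scalars. -/
def IsConeSet (C : Set V) : Prop := ∀ x ∈ C, ∀ a : ℝ, 0 ≤ a → a • x ∈ C

/-- Topological closedness of a subset of a finite-dimensional real vector space,
expressed through (all) linear identifications with `Fin n → ℝ`. -/
def IsClosedSet (C : Set V) : Prop := ∀ (n : ℕ) (e : V ≃ₗ[ℝ] (Fin n → ℝ)), IsClosed (e '' C)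

/-- A proper cone: convex, closed, salient and generating. -/
def IsProperCone (C : Set V) : Prop :=
  Convex ℝ C ∧ IsClosedSet C ∧ IsConeSet C ∧ C ∩ (-C) = {0} ∧ Submodule.span ℝ C = ⊤

/-- A classical cone: the set of vectors with nonnegative coordinates in some basis,
i.e. the cone generated by a basis of the space. -/
def IsClassicalCone (C : Set V) : Prop :=
  ∃ (ι : Type) (b : Module.Basis ι ℝ V), C = {x | ∀ i, 0 ≤ b.repr x i}

/-- `C'` is a retract of `C` if there are positive maps `Φ, Ψ` with `Φ ∘ Ψ = id`. -/
def IsRetractOf (C' : Set V') (C : Set V) : Prop :=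
  ∃ (Φ : V →ₗ[ℝ] V') (Ψ : V' →ₗ[ℝ] V),
    (∀ x ∈ C, Φ x ∈ C') ∧ (∀ y ∈ C', Ψ y ∈ C) ∧ Φ ∘ₗ Ψ = LinearMap.id

/-- A polyhedral cone: the conical hull of finitely many vectors. -/
def IsPolyhedralCone (C : Set V) : Prop :=
  ∃ (k : ℕ) (v : Fin k → V),
    C = {x | ∃ c : Fin k → ℝ, (∀ i, 0 ≤ c i) ∧ x = ∑ i, c i • v i}

end Defs

/-- The Lorentz cone of parameter `r` in `ℝ^(n+1)`. -/
noncomputable def lorentz (n : ℕ) (r : ℝ) : Set (Fin (n + 1) → ℝ) :=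
  {x | Real.sqrt (∑ i : Fin n, x i.castSucc ^ 2) ≤ r * x (Fin.last n)}

-- canonical basis vector
def ee (n : ℕ) (i : Fin (n+1)) : Fin (n+1) → ℝ := fun j => if i = j then 1 else 0

-- Cauchy-Schwarz consequence: pairing in two Lorentz cones
lemma lorentz_pair (n : ℕ) (r s : ℝ) (u v : Fin (n+1) → ℝ)
    (hu : u ∈ lorentz n r) (hv : v ∈ lorentz n s) :
    ∑ i : Fin n, u i.castSucc * v i.castSucc ≤ (r * u (Fin.last n)) * (s * v (Fin.last n)) := by
  calc ∑ i : Fin n, u i.castSucc * v i.castSucc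
      ≤ Real.sqrt (∑ i : Fin n, u i.castSucc ^ 2) * Real.sqrt (∑ i : Fin n, v i.castSucc ^ 2) :=
        Real.sum_mul_le_sqrt_mul_sqrt _ _ _
    _ ≤ (r * u (Fin.last n)) * (s * v (Fin.last n)) := by
        have hu' : Real.sqrt (∑ i : Fin n, u i.castSucc ^ 2) ≤ r * u (Fin.last n) := hu
        exact mul_le_mul hu' hv (Real.sqrt_nonneg _)
          (le_trans (Real.sqrt_nonneg _) hu')

lemma ee_last_mem (n : ℕ) : ee n (Fin.last n) ∈ lorentz n 1 := by
  have : ∀ i : Fin n, (ee n (Fin.last n)) i.castSucc ^ 2 = 0 := by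
    intro i
    simp [ee, (Fin.castSucc_lt_last i).ne']
  have hsum : (∑ i : Fin n, (ee n (Fin.last n)) i.castSucc ^ 2) = 0 :=
    Finset.sum_eq_zero fun i _ => this i
  show Real.sqrt (∑ i : Fin n, (ee n (Fin.last n)) i.castSucc ^ 2) ≤ 1 * ee n (Fin.last n) (Fin.last n)
  rw [hsum, Real.sqrt_zero]
  simp [ee]

lemma dual_vec_mem (n : ℕ) (f : Module.Dual ℝ (Fin (n+1) → ℝ))
    (hf : ∀ x ∈ lorentz n 1, 0 ≤ f x) :
    (fun i => f (ee n i)) ∈ lorentz n 1 := by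
  set vf : Fin (n+1) → ℝ := fun i => f (ee n i) with hvf
  set s : ℝ := Real.sqrt (∑ i : Fin n, vf i.castSucc ^ 2) with hs
  have hs0 : 0 ≤ s := Real.sqrt_nonneg _
  have hssq : s ^ 2 = ∑ i : Fin n, vf i.castSucc ^ 2 :=
    Real.sq_sqrt (Finset.sum_nonneg fun i _ => sq_nonneg _)
  have hlast : 0 ≤ vf (Fin.last n) := hf _ (ee_last_mem n)
  -- test vector
  set x : Fin (n+1) → ℝ := Fin.snoc (fun i : Fin n => -(vf i.castSucc)) s with hx
  have hxmem : x ∈ lorentz n 1 := by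
    show Real.sqrt (∑ i : Fin n, x i.castSucc ^ 2) ≤ 1 * x (Fin.last n)
    have : ∀ i : Fin n, x i.castSucc ^ 2 = vf i.castSucc ^ 2 := by
      intro i; simp [hx, Fin.snoc_castSucc, sq]
    rw [Finset.sum_congr rfl (fun i _ => this i)]
    simp [hx, Fin.snoc_last, ← hs]
  have hfx : 0 ≤ f x := hf x hxmem
  have hexp : f x = ∑ i : Fin (n+1), x i * vf i := by
    rw [LinearMap.pi_apply_eq_sum_univ f x]
    exact Finset.sum_congr rfl fun i _ => by rw [smul_eq_mul]; rfl
  rw [hexp, Fin.sum_univ_castSucc] at hfx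
  have h1 : ∑ i : Fin n, x i.castSucc * vf i.castSucc = -s ^ 2 := by
    have heach : ∀ i : Fin n, x i.castSucc * vf i.castSucc = -(vf i.castSucc ^ 2) := by
      intro i; simp [hx, Fin.snoc_castSucc, sq]
    rw [Finset.sum_congr rfl (fun i _ => heach i), Finset.sum_neg_distrib, ← hssq]
  rw [h1] at hfx
  have h2 : x (Fin.last n) = s := by simp [hx, Fin.snoc_last]
  rw [h2] at hfx
  show s ≤ 1 * vf (Fin.last n)
  rw [one_mul]
  nlinarith [hfx, hs0, hlast]

lemma lorentz_selfdual (n : ℕ) (u v : Fin (n+1) → ℝ)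
    (hu : u ∈ lorentz n 1) (hv : v ∈ lorentz n 1) :
    0 ≤ ∑ i : Fin (n+1), u i * v i := by
  have hu' : Real.sqrt (∑ i : Fin n, u i.castSucc ^ 2) ≤ 1 * u (Fin.last n) := hu
  have hv' : Real.sqrt (∑ i : Fin n, v i.castSucc ^ 2) ≤ 1 * v (Fin.last n) := hv
  rw [one_mul] at hu' hv'
  have h1 : 0 ≤ u (Fin.last n) := le_trans (Real.sqrt_nonneg _) hu'
  have hcs := Real.sum_mul_le_sqrt_mul_sqrt Finset.univ
    (fun i : Fin n => -(u i.castSucc)) (fun i : Fin n => v i.castSucc)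
  simp only [neg_mul, Finset.sum_neg_distrib, neg_sq] at hcs
  have h2 := mul_le_mul hu' hv' (Real.sqrt_nonneg _) h1
  rw [Fin.sum_univ_castSucc]
  linarith

lemma ee_sum_delta (n : ℕ) (a : Fin (n+1)) :
    ∑ j : Fin (n+1), ee n j a * ee n j a = 1 := by
  simp [ee, ite_mul, Finset.sum_ite_eq]


/-- If `L_n(1) ⊛ L_n(1) ⊆ L_n(1) ⊙ L_n(r)` then `r ≥ n`. -/
theorem stmt12 (n : ℕ) (r : ℝ) (hr : 0 ≤ r)
    (h : maxTensor (lorentz n 1) (lorentz n 1) ⊆ minTensor (lorentz n 1) (lorentz n r)) :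
    (n : ℝ) ≤ r := by
  classical
  set z : (Fin (n+1) → ℝ) ⊗[ℝ] (Fin (n+1) → ℝ) := ∑ i, ee n i ⊗ₜ[ℝ] ee n i with hz
  -- z is in the max tensor product
  have hzmax : z ∈ maxTensor (lorentz n 1) (lorentz n 1) := by
    intro f hf g hg
    have hev : pairTensor f g z = ∑ i, f (ee n i) * g (ee n i) := by
      rw [hz, map_sum]
      exact Finset.sum_congr rfl fun i _ => by simp [pairTensor, smul_eq_mul]
    rw [hev]
    exact lorentz_selfdual n _ _ (dual_vec_mem n f hf) (dual_vec_mem n g hg)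
  have hzmin : z ∈ convexHull ℝ
      {w | ∃ x ∈ lorentz n 1, ∃ y ∈ lorentz n r, w = x ⊗ₜ[ℝ] y} := h hzmax
  -- the separating functional
  set Λ : Module.Dual ℝ ((Fin (n+1) → ℝ) ⊗[ℝ] (Fin (n+1) → ℝ)) :=
    (∑ i : Fin n, pairTensor (LinearMap.proj i.castSucc) (LinearMap.proj i.castSucc))
      - r • pairTensor (LinearMap.proj (Fin.last n)) (LinearMap.proj (Fin.last n)) with hΛ
  have hΛtmul : ∀ x y : Fin (n+1) → ℝ,
      Λ (x ⊗ₜ[ℝ] y) = (∑ i : Fin n, x i.castSucc * y i.castSucc)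
        - r * (x (Fin.last n) * y (Fin.last n)) := by
    intro x y
    simp [hΛ, pairTensor, smul_eq_mul]
  have hhalf : Convex ℝ {w | Λ w ≤ 0} := convex_halfSpace_le Λ.isLinear 0
  have hgen : {w | ∃ x ∈ lorentz n 1, ∃ y ∈ lorentz n r, w = x ⊗ₜ[ℝ] y} ⊆ {w | Λ w ≤ 0} := by
    rintro w ⟨x, hx, y, hy, rfl⟩
    rw [Set.mem_setOf_eq, hΛtmul]
    have := lorentz_pair n 1 r x y hx hy
    rw [one_mul] at this
    linarith
  have hΛz : Λ z ≤ 0 := convexHull_min hgen hhalf hzmin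
  -- evaluate Λ z
  have hev : Λ z = (n : ℝ) - r := by
    have hab : ∀ a : Fin (n+1),
        pairTensor (LinearMap.proj (R := ℝ) (φ := fun _ : Fin (n+1) => ℝ) a)
          (LinearMap.proj a) z = 1 := by
      intro a
      rw [hz, map_sum]
      have : ∀ j : Fin (n+1), pairTensor (LinearMap.proj (R := ℝ)
          (φ := fun _ : Fin (n+1) => ℝ) a) (LinearMap.proj a) (ee n j ⊗ₜ[ℝ] ee n j)
          = ee n j a * ee n j a := by
        intro j; simp [pairTensor, smul_eq_mul]
      rw [Finset.sum_congr rfl fun j _ => this j, ee_sum_delta]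
    simp only [hΛ, LinearMap.sub_apply, LinearMap.sum_apply, LinearMap.smul_apply, smul_eq_mul]
    rw [Finset.sum_congr rfl fun i _ => hab i.castSucc, hab (Fin.last n)]
    simp
  rw [hev] at hΛz
  linarith
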